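/- Let P_0 and R_0 be non-isomorphic posets, each of size m, and let i > m. Then the number of isomorphism classes of downsets of size m+i+1 of the disjoint union P_iR_i is d_{m+i+1}(P_iR_i) = C(P_0R_0) + ⌈(i−m)/2⌉. In particular, for i > m the sequence satisfies d_{m+i+1}(P_iR_i) = d_{m+i}(P_{i−1}R_{i−1}) if m+i is even and d_{m+i+1}(P_iR_i) = d_{m+i}(P_{i−1}R_{i−1}) + 1 if m+i is odd. -/

import Mathlib

/-!
Formalization framework: finite posets are bundled as `FinPartOrd.{0}`, downsets are
`Finset`s of elements, unlabelled posets are isomorphism classes (`UPoset`), and a witness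
of a set `Γ` of unlabelled posets at size `n` is a finite poset whose set of size-`n`
downsets, up to isomorphism, is exactly `Γ`.
-/

attribute [local instance] Classical.propDecidable

noncomputable section

open Finset

/-- `D` is a downset of the finite poset `Q`. -/
def IsDownset (Q : FinPartOrd.{0}) (D : Finset ↥Q) : Prop :=
  ∀ ⦃a b : ↥Q⦄, a ∈ D → b ≤ a → b ∈ D

/-- The induced subposet of `Q` on a finset `D` of its elements. -/
def subposet (Q : FinPartOrd.{0}) (D : Finset ↥Q) : FinPartOrd.{0} :=
  FinPartOrd.of {x : ↥Q // x ∈ D}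

/-- The isomorphism setoid on finite posets. -/
def isoSetoid : Setoid FinPartOrd.{0} where
  r P Q := Nonempty (↥P ≃o ↥Q)
  iseqv := ⟨fun _ => ⟨OrderIso.refl _⟩, fun ⟨e⟩ => ⟨e.symm⟩, fun ⟨e⟩ ⟨f⟩ => ⟨e.trans f⟩⟩

/-- Unlabelled finite posets: isomorphism classes of finite posets. -/
def UPoset := Quotient isoSetoid

/-- The isomorphism class of a finite poset. -/
def cls (P : FinPartOrd.{0}) : UPoset := Quotient.mk isoSetoid P

/-- The number of elements of a finite poset. -/
def size (Q : FinPartOrd.{0}) : ℕ := Fintype.card ↥Q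

/-- The size of an isomorphism class of finite posets. -/
def usize : UPoset → ℕ :=
  Quotient.lift size fun _ _ h => h.elim fun e => Fintype.card_congr e.toEquiv

/-- `D_n(Q)` : the set of downsets of `Q` of size `n`, up to isomorphism. -/
def DSet (n : ℕ) (Q : FinPartOrd.{0}) : Set UPoset :=
  {c | ∃ D : Finset ↥Q, IsDownset Q D ∧ D.card = n ∧ cls (subposet Q D) = c}

/-- `d_n(Q)` : the number of isomorphism classes of downsets of `Q` of size `n`. -/
def dNum (n : ℕ) (Q : FinPartOrd.{0}) : ℕ := (DSet n Q).ncard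

/-- `D(Q)` : the set of nonempty downsets of `Q`, up to isomorphism. -/
def DAllSet (Q : FinPartOrd.{0}) : Set UPoset :=
  {c | ∃ D : Finset ↥Q, IsDownset Q D ∧ D.Nonempty ∧ cls (subposet Q D) = c}

/-- `Q` is a witness of the set `Γ` of unlabelled posets (at size `n`): the set of size-`n`
downsets of `Q`, up to isomorphism, is exactly `Γ`. -/
def IsWitness (n : ℕ) (Γ : Set UPoset) (Q : FinPartOrd.{0}) : Prop := DSet n Q = Γ

/-- `Q` is a minimal witness of `Γ` : `Q` is a witness and no proper downset of `Q` is
itself a witness of `Γ`. -/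
def IsMinimalWitness (n : ℕ) (Γ : Set UPoset) (Q : FinPartOrd.{0}) : Prop :=
  IsWitness n Γ Q ∧
    ∀ D : Finset ↥Q, IsDownset Q D → D ≠ Finset.univ → ¬IsWitness n Γ (subposet Q D)

/-- The height of an element: the number of elements of a longest chain whose maximum is `x`. -/
def heightEl (Q : FinPartOrd.{0}) (x : ↥Q) : ℕ :=
  sSup {k | ∃ c : Finset ↥Q, IsChain (· ≤ ·) (c : Set ↥Q) ∧ x ∈ c ∧ (∀ y ∈ c, y ≤ x) ∧ c.card = k}

/-- The height of a finite poset: the number of elements of a longest chain. -/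
def posetHeight (Q : FinPartOrd.{0}) : ℕ :=
  sSup {k | ∃ c : Finset ↥Q, IsChain (· ≤ ·) (c : Set ↥Q) ∧ c.card = k}

/-- A finite poset is Newtonian if every element of level `i` covers every element of
level `i - 1`. -/
def Newtonian (Q : FinPartOrd.{0}) : Prop :=
  ∀ x y : ↥Q, heightEl Q y = heightEl Q x + 1 → x ⋖ y

/-- A finite poset is connected if it is nonempty and any two elements are joined by a
comparability path. -/
def ConnectedPoset (Q : FinPartOrd.{0}) : Prop :=
  Nonempty ↥Q ∧ ∀ x y : ↥Q, Relation.ReflTransGen (fun a b : ↥Q => a ≤ b ∨ b ≤ a) x y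

/-- `x` is a maximal element of the subset `W` of `Q`. -/
def IsMaxIn (Q : FinPartOrd.{0}) (W : Finset ↥Q) (x : ↥Q) : Prop :=
  x ∈ W ∧ ∀ y ∈ W, x ≤ y → y = x

/-- `x` is a maximal element of the finite poset `R`. -/
def IsMaxEl (R : FinPartOrd.{0}) (x : ↥R) : Prop := ∀ y, x ≤ y → y = x

/-- A poset of type 𝒲 : the disjoint union of two connected Newtonian posets that are not
isomorphic, but which only differ in one maximal element (they become isomorphic after the
removal of a suitable maximal element from each). -/
def TypeW (P : FinPartOrd.{0}) : Prop :=
  ∃ W₁ W₂ : Finset ↥P,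
    W₁ ∪ W₂ = Finset.univ ∧ Disjoint W₁ W₂ ∧
    (∀ x ∈ W₁, ∀ y ∈ W₂, ¬x ≤ y ∧ ¬y ≤ x) ∧
    ConnectedPoset (subposet P W₁) ∧ ConnectedPoset (subposet P W₂) ∧
    Newtonian (subposet P W₁) ∧ Newtonian (subposet P W₂) ∧
    ¬Nonempty (↥(subposet P W₁) ≃o ↥(subposet P W₂)) ∧
    ∃ x y, IsMaxIn P W₁ x ∧ IsMaxIn P W₂ y ∧
      Nonempty (↥(subposet P (W₁.erase x)) ≃o ↥(subposet P (W₂.erase y)))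

/-- An antichain on `i` elements. -/
def AntichainFin (i : ℕ) : Type := Fin i

instance (i : ℕ) : PartialOrder (AntichainFin i) where
  le x y := x = y
  le_refl _ := rfl
  le_trans a b c h₁ h₂ := show a = c from (show a = b from h₁).trans (show b = c from h₂)
  le_antisymm _ _ h _ := h

instance (i : ℕ) : Fintype (AntichainFin i) := inferInstanceAs (Fintype (Fin i))
instance (i : ℕ) : Fintype (WithTop (AntichainFin i)) :=
  inferInstanceAs (Fintype (Option (Fin i)))

/-- `Λ_i`: the poset with `i` minimal elements and one maximal element above all of them. -/
def Lambda (i : ℕ) : FinPartOrd.{0} := FinPartOrd.of (WithTop (AntichainFin i))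

/-- `k` disjoint copies of a poset `α`. -/
def Copies (k : ℕ) (α : Type) : Type := Fin k × α

instance (k : ℕ) (α : Type) [PartialOrder α] : PartialOrder (Copies k α) where
  le x y := x.1 = y.1 ∧ x.2 ≤ y.2
  le_refl _ := ⟨rfl, le_refl _⟩
  le_trans _ _ _ h₁ h₂ := ⟨h₁.1.trans h₂.1, le_trans h₁.2 h₂.2⟩
  le_antisymm x y h₁ h₂ := by
    obtain ⟨x₁, x₂⟩ := x
    obtain ⟨y₁, y₂⟩ := y
    obtain ⟨h, h'⟩ := h₁
    cases h
    exact congrArg _ (le_antisymm h' h₂.2)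

instance (k : ℕ) (α : Type) [Fintype α] : Fintype (Copies k α) :=
  inferInstanceAs (Fintype (Fin k × α))

/-- `H_ℓ`: the poset whose connected components are `ℓ` copies of `Λ₂` and one copy of
`Λ_{3(ℓ-1)}`. -/
def Hposet (ℓ : ℕ) : FinPartOrd.{0} :=
  FinPartOrd.of (Copies ℓ (WithTop (AntichainFin 2)) ⊕ WithTop (AntichainFin (3 * (ℓ - 1))))

/-- The poset `P₀` placed above a chain of `i` elements. -/
def withChain (P₀ : FinPartOrd.{0}) (i : ℕ) : FinPartOrd.{0} :=
  FinPartOrd.of (Fin i ⊕ₗ ↥P₀)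

/-- The disjoint union of two finite posets. -/
def disjSum (P R : FinPartOrd.{0}) : FinPartOrd.{0} := FinPartOrd.of (↥P ⊕ ↥R)

/-- The poset `P_iR_i`: the disjoint union of `P₀` and `R₀` each placed above a chain of
`i` elements. -/
def PRposet (P₀ R₀ : FinPartOrd.{0}) (i : ℕ) : FinPartOrd.{0} :=
  disjSum (withChain P₀ i) (withChain R₀ i)

/-- `C(P₀R₀) = |D(P₀)| + |D(R₀)| − |D(P₀) ∩ D(R₀)|`. -/
def CNum (P₀ R₀ : FinPartOrd.{0}) : ℕ :=
  (DAllSet P₀).ncard + (DAllSet R₀).ncard - (DAllSet P₀ ∩ DAllSet R₀).ncard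

/-- The vertices of the exchange graph: the downsets of `Q` of size `n`, as actual subsets. -/
def EGVert (n : ℕ) (Q : FinPartOrd.{0}) : Type :=
  {D : Finset ↥Q // IsDownset Q D ∧ D.card = n}

/-- The exchange graph `G_n(Q)`: two size-`n` downsets are adjacent iff they differ by
exactly one element. -/
def ExchangeGraph (n : ℕ) (Q : FinPartOrd.{0}) : SimpleGraph (EGVert n Q) where
  Adj X Y := (X.1 \ Y.1).card = 1 ∧ (Y.1 \ X.1).card = 1
  symm := ⟨fun X Y h => ⟨h.2, h.1⟩⟩
  loopless := ⟨fun X h => by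
    simp only [Finset.sdiff_self, Finset.card_empty] at h
    exact absurd h.1 (by simp)⟩

/-- The downset `D` of `Q`, viewed as a poset, is isomorphic (a "copy of") `P`. -/
def IsoTo (Q : FinPartOrd.{0}) (D : Finset ↥Q) (P : FinPartOrd.{0}) : Prop :=
  Nonempty (↥(subposet Q D) ≃o ↥P)

/-- A path `A :: M ++ [C]` in the exchange graph `G_n(Q)` whose first vertex is a copy of
`Pa`, whose last vertex is a copy of `Pb`, and all of whose internal vertices are copies of
`Pmid`. -/
def SpecialPath (n : ℕ) (Q : FinPartOrd.{0}) (Pa Pmid Pb : FinPartOrd.{0})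
    (A : EGVert n Q) (M : List (EGVert n Q)) (C : EGVert n Q) : Prop :=
  List.Chain' (ExchangeGraph n Q).Adj (A :: M ++ [C]) ∧
    IsoTo Q A.1 Pa ∧ IsoTo Q C.1 Pb ∧ ∀ v ∈ M, IsoTo Q v.1 Pmid

/-- `T` is an antichain in `Q`. -/
def IsAntichainIn (Q : FinPartOrd.{0}) (T : Finset ↥Q) : Prop :=
  ∀ x ∈ T, ∀ y ∈ T, x ≤ y → x = y

/-- The possible shapes of `A \ X` and `C \ X`: an antichain possibly together with a single
element below all of it and/or a single element above all of it, or a two-element chain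
together with one incomparable element. -/
def GoodForm (Q : FinPartOrd.{0}) (S : Finset ↥Q) : Prop :=
  (∃ T : Finset ↥Q, IsAntichainIn Q T ∧
    (S = T ∨
      (∃ b, b ∉ T ∧ S = insert b T ∧ ∀ x ∈ T, b < x) ∨
      (∃ t, t ∉ T ∧ S = insert t T ∧ ∀ x ∈ T, x < t) ∨
      (∃ b t, b ∉ T ∧ t ∉ T ∧ b ≠ t ∧ S = insert b (insert t T) ∧
        (∀ x ∈ T, b < x) ∧ ∀ x ∈ T, x < t))) ∨
  (∃ x y z : ↥Q, S = {x, y, z} ∧ x ≠ y ∧ x ≠ z ∧ y ≠ z ∧ x < y ∧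
    ¬x ≤ z ∧ ¬z ≤ x ∧ ¬y ≤ z ∧ ¬z ≤ y)


/-! ### Auxiliary machinery for `ladder_dNum` -/

lemma cls_eq_iff {P Q : FinPartOrd.{0}} : cls P = cls Q ↔ Nonempty (↥P ≃o ↥Q) :=
  ⟨fun h => Quotient.exact h, fun h => Quotient.sound h⟩

lemma usize_cls (P : FinPartOrd.{0}) : usize (cls P) = size P := rfl

/-- A chain with `j` elements. -/
def chainP (j : ℕ) : FinPartOrd.{0} := FinPartOrd.of (Fin j)

section SumIsos

variable {α β γ δ : Type} [PartialOrder α] [PartialOrder β] [PartialOrder γ] [PartialOrder δ]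

/-- Congruence of disjoint unions of posets. -/
def sumIsoCongr (e : α ≃o γ) (f : β ≃o δ) : α ⊕ β ≃o γ ⊕ δ where
  toEquiv := Equiv.sumCongr e.toEquiv f.toEquiv
  map_rel_iff' := by
    rintro (a | a) (b | b) <;> simp [Sum.le_def, Sum.liftRel_iff]

/-- Congruence of lexicographic sums of posets. -/
def sumLexIsoCongr (e : α ≃o γ) (f : β ≃o δ) : α ⊕ₗ β ≃o γ ⊕ₗ δ where
  toEquiv := Equiv.sumCongr e.toEquiv f.toEquiv
  map_rel_iff' := by
    rintro (a | a) (b | b)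
    · show (toLex (Sum.inl (e a)) : γ ⊕ₗ δ) ≤ toLex (Sum.inl (e b)) ↔
        (toLex (Sum.inl a) : α ⊕ₗ β) ≤ toLex (Sum.inl b)
      rw [Sum.Lex.inl_le_inl_iff, Sum.Lex.inl_le_inl_iff, e.le_iff_le]
    · show (toLex (Sum.inl (e a)) : γ ⊕ₗ δ) ≤ toLex (Sum.inr (f b)) ↔
        (toLex (Sum.inl a) : α ⊕ₗ β) ≤ toLex (Sum.inr b)
      simp [Sum.Lex.inl_le_inr]
    · show (toLex (Sum.inr (f a)) : γ ⊕ₗ δ) ≤ toLex (Sum.inl (e b)) ↔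
        (toLex (Sum.inr a) : α ⊕ₗ β) ≤ toLex (Sum.inl b)
      simp [Sum.Lex.not_inr_le_inl]
    · show (toLex (Sum.inr (f a)) : γ ⊕ₗ δ) ≤ toLex (Sum.inr (f b)) ↔
        (toLex (Sum.inr a) : α ⊕ₗ β) ≤ toLex (Sum.inr b)
      rw [Sum.Lex.inr_le_inr_iff, Sum.Lex.inr_le_inr_iff, f.le_iff_le]

end SumIsos

section BelowCount

/-- The number of elements below (or equal to) `x`. -/
def bc {α : Type} [PartialOrder α] [Fintype α] (x : α) : ℕ :=
  (Finset.univ.filter (fun y => y ≤ x)).card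

variable {α β : Type} [PartialOrder α] [Fintype α] [PartialOrder β] [Fintype β]

lemma bc_iso (e : α ≃o β) (x : α) : bc (e x) = bc x := by
  unfold bc
  have himg : (Finset.univ.filter (fun y => y ≤ e x))
      = (Finset.univ.filter (fun y => y ≤ x)).image e := by
    ext y
    simp only [Finset.mem_image, Finset.mem_filter, Finset.mem_univ, true_and]
    constructor
    · intro hy
      exact ⟨e.symm y, by rwa [← e.le_iff_le, e.apply_symm_apply], e.apply_symm_apply y⟩
    · rintro ⟨z, hz, rfl⟩
      exact e.le_iff_le.2 hz
  rw [himg, Finset.card_image_of_injective _ e.injective]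

/-- Restriction of an order isomorphism to elements with more than `t` elements below. -/
def bcSubtypeIso (e : α ≃o β) (t : ℕ) : {x : α // t < bc x} ≃o {y : β // t < bc y} where
  toEquiv := e.toEquiv.subtypeEquiv fun x => by
    rw [show bc (e.toEquiv x) = bc x from bc_iso e x]
  map_rel_iff' := by
    intro a b
    simp only [Equiv.subtypeEquiv_apply, ← Subtype.coe_le_coe]
    exact e.le_iff_le

lemma card_bc_gt (e : α ≃o β) (t : ℕ) :
    (Finset.univ.filter (fun x : α => t < bc x)).card
      = (Finset.univ.filter (fun y : β => t < bc y)).card := by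
  have himg : (Finset.univ.filter (fun y : β => t < bc y))
      = (Finset.univ.filter (fun x : α => t < bc x)).image e := by
    ext y
    simp only [Finset.mem_image, Finset.mem_filter, Finset.mem_univ, true_and]
    constructor
    · intro hy
      refine ⟨e.symm y, ?_, e.apply_symm_apply y⟩
      rwa [← e.apply_symm_apply y, bc_iso] at hy
    · rintro ⟨z, hz, rfl⟩
      rwa [bc_iso]
  rw [himg, Finset.card_image_of_injective _ e.injective]

end BelowCount

section FinCount

lemma fin_filter_le_card (t n : ℕ) :
    (Finset.univ.filter (fun j : Fin n => t ≤ (j : ℕ))).card = n - t := by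
  have himg : (Finset.univ.filter (fun j : Fin n => t ≤ (j : ℕ))).image Fin.val
      = Finset.Ico t n := by
    ext k
    simp only [Finset.mem_image, Finset.mem_filter, Finset.mem_univ, true_and,
      Finset.mem_Ico]
    constructor
    · rintro ⟨j, hj, rfl⟩; exact ⟨hj, j.isLt⟩
    · rintro ⟨h1, h2⟩; exact ⟨⟨k, h2⟩, h1, rfl⟩
  rw [← Nat.card_Ico, ← himg, Finset.card_image_of_injective _ Fin.val_injective]

lemma fin_filter_lt_card (t n : ℕ) (h : t ≤ n) :
    (Finset.univ.filter (fun j : Fin n => (j : ℕ) < t)).card = t := by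
  have himg : (Finset.univ.filter (fun j : Fin n => (j : ℕ) < t)).image Fin.val
      = Finset.range t := by
    ext k
    simp only [Finset.mem_image, Finset.mem_filter, Finset.mem_univ, true_and,
      Finset.mem_range]
    constructor
    · rintro ⟨j, hj, rfl⟩; exact hj
    · intro hk; exact ⟨⟨k, lt_of_lt_of_le hk h⟩, hk, rfl⟩
  have h2 := congrArg Finset.card himg
  rwa [Finset.card_image_of_injective _ Fin.val_injective, Finset.card_range] at h2

lemma card_filter_sum {α β : Type} [Fintype α] [Fintype β] (P : α ⊕ β → Prop) :
    (Finset.univ.filter P).card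
      = (Finset.univ.filter (fun a : α => P (Sum.inl a))).card
        + (Finset.univ.filter (fun b : β => P (Sum.inr b))).card := by
  have hsplit : (Finset.univ.filter P)
      = ((Finset.univ.filter (fun a : α => P (Sum.inl a))).image Sum.inl)
        ∪ ((Finset.univ.filter (fun b : β => P (Sum.inr b))).image Sum.inr) := by
    ext x
    rcases x with a | b <;>
      simp [Finset.mem_filter, Finset.mem_image]
  rw [hsplit, Finset.card_union_of_disjoint, Finset.card_image_of_injective _ Sum.inl_injective,
    Finset.card_image_of_injective _ Sum.inr_injective]
  simp [Finset.disjoint_left]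

end FinCount

section LinearChain

lemma linear_iso_fin {α : Type} [PartialOrder α] [Fintype α]
    (htot : ∀ x y : α, x ≤ y ∨ y ≤ x) {n : ℕ} (hn : Fintype.card α = n) :
    Nonempty (α ≃o Fin n) := by
  letI : LinearOrder α := { (inferInstance : PartialOrder α) with
    le_total := htot, toDecidableLE := Classical.decRel _ }
  exact ⟨(monoEquivOfFin α hn).symm⟩

end LinearChain

section LexDownset

variable {β : Type} [PartialOrder β] [Fintype β] {i : ℕ}

/-- The part of a subset of a lex sum living in the upper summand. -/
def lexTop (E : Finset (Fin i ⊕ₗ β)) : Finset β :=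
  Finset.univ.filter (fun p => toLex (Sum.inr p) ∈ E)

lemma mem_lexTop {E : Finset (Fin i ⊕ₗ β)} {p : β} :
    p ∈ lexTop E ↔ toLex (Sum.inr p) ∈ E := by
  simp [lexTop]

lemma all_inl_mem {E : Finset (Fin i ⊕ₗ β)}
    (hd : ∀ ⦃x y : Fin i ⊕ₗ β⦄, x ∈ E → y ≤ x → y ∈ E) {p : β}
    (hp : toLex (Sum.inr p) ∈ E) (j : Fin i) : toLex (Sum.inl j) ∈ E :=
  hd hp (Sum.Lex.inl_le_inr j p)

lemma lex_decomp {E : Finset (Fin i ⊕ₗ β)}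
    (hAll : ∀ j : Fin i, toLex (Sum.inl j) ∈ E) :
    E = (Finset.univ.image (fun j : Fin i => toLex (Sum.inl j)))
      ∪ ((lexTop E).image (fun p => toLex (Sum.inr p))) := by
  ext x
  cases x with | h x => ?_
  rcases x with j | p
  · simp only [Finset.mem_union, Finset.mem_image, Finset.mem_univ, true_and, mem_lexTop]
    constructor
    · intro _; exact Or.inl ⟨j, rfl⟩
    · rintro (⟨j', hj⟩ | ⟨p, _, hp⟩)
      · obtain rfl : j' = j := Sum.inl.inj hj
        exact hAll j'
      · exact (Sum.inr_ne_inl hp).elim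
  · simp only [Finset.mem_union, Finset.mem_image, Finset.mem_univ, true_and, mem_lexTop]
    constructor
    · intro h; exact Or.inr ⟨p, h, rfl⟩
    · rintro (⟨j', hj⟩ | ⟨p', hp', h⟩)
      · exact (Sum.inl_ne_inr hj).elim
      · obtain rfl : p' = p := Sum.inr.inj h
        exact hp'

lemma lex_card {E : Finset (Fin i ⊕ₗ β)}
    (hAll : ∀ j : Fin i, toLex (Sum.inl j) ∈ E) :
    E.card = i + (lexTop E).card := by
  have h1 : Function.Injective (fun j : Fin i => (toLex (Sum.inl j) : Fin i ⊕ₗ β)) :=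
    fun a b hab => Sum.inl.inj hab
  have h2 : Function.Injective (fun p : β => (toLex (Sum.inr p) : Fin i ⊕ₗ β)) :=
    fun a b hab => Sum.inr.inj hab
  have hdis : Disjoint ((Finset.univ : Finset (Fin i)).image
      (fun j : Fin i => (toLex (Sum.inl j) : Fin i ⊕ₗ β)))
      ((lexTop E).image (fun p => (toLex (Sum.inr p) : Fin i ⊕ₗ β))) := by
    rw [Finset.disjoint_left]
    rintro x hx hx'
    simp only [Finset.mem_image, Finset.mem_univ, true_and] at hx hx'
    obtain ⟨j, rfl⟩ := hx
    obtain ⟨p, _, hp⟩ := hx'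
    exact (Sum.inr_ne_inl hp).elim
  conv_lhs => rw [lex_decomp hAll]
  rw [Finset.card_union_of_disjoint hdis, Finset.card_image_of_injective _ h1,
    Finset.card_image_of_injective _ h2, Finset.card_univ, Fintype.card_fin]

/-- Splitting a downset of a lex sum containing the whole lower chain. -/
def lexSplitIso (E : Finset (Fin i ⊕ₗ β))
    (hAll : ∀ j : Fin i, toLex (Sum.inl j) ∈ E) :
    {x : Fin i ⊕ₗ β // x ∈ E} ≃o (Fin i ⊕ₗ {p : β // p ∈ lexTop E}) where
  toFun x := match x with
    | ⟨Sum.inl j, _⟩ => toLex (Sum.inl j)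
    | ⟨Sum.inr p, h⟩ => toLex (Sum.inr ⟨p, mem_lexTop.2 h⟩)
  invFun y := match y with
    | Sum.inl j => ⟨toLex (Sum.inl j), hAll j⟩
    | Sum.inr p => ⟨toLex (Sum.inr p.1), mem_lexTop.1 p.2⟩
  left_inv := by rintro ⟨j | p, h⟩ <;> rfl
  right_inv := by rintro (j | ⟨p, hp⟩) <;> rfl
  map_rel_iff' := by
    rintro ⟨a | a, ha⟩ ⟨b | b, hb⟩
    · exact Sum.Lex.inl_le_inl_iff.trans
        ((Subtype.mk_le_mk.trans Sum.Lex.inl_le_inl_iff).symm)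
    · exact iff_of_true (Sum.Lex.inl_le_inr _ _)
        (Subtype.mk_le_mk.2 (Sum.Lex.inl_le_inr _ _))
    · exact iff_of_false Sum.Lex.not_inr_le_inl
        (fun h => Sum.Lex.not_inr_le_inl (Subtype.mk_le_mk.1 h))
    · exact (Sum.Lex.inr_le_inr_iff.trans Subtype.mk_le_mk).trans
        ((Subtype.mk_le_mk.trans Sum.Lex.inr_le_inr_iff).symm)

lemma lex_chain_tot {E : Finset (Fin i ⊕ₗ β)}
    (hno : ∀ p : β, toLex (Sum.inr p) ∉ E) :
    ∀ x ∈ E, ∀ y ∈ E, x ≤ y ∨ y ≤ x := by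
  intro x hx y hy
  rcases x with j | p
  · rcases y with j' | p'
    · rcases le_total j j' with h | h
      · exact Or.inl (Sum.Lex.inl_le_inl_iff.2 h)
      · exact Or.inr (Sum.Lex.inl_le_inl_iff.2 h)
    · exact absurd hy (hno p')
  · exact absurd hx (hno p)

lemma lex_chain_card_le {E : Finset (Fin i ⊕ₗ β)}
    (hno : ∀ p : β, toLex (Sum.inr p) ∉ E) : E.card ≤ i := by
  have hsub : E ⊆ Finset.univ.image (fun j : Fin i => toLex (Sum.inl j)) := by
    intro x hx
    cases x with | h x => ?_
    rcases x with j | p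
    · simp only [Finset.mem_image, Finset.mem_univ, true_and]
      exact ⟨j, rfl⟩
    · exact absurd hx (hno p)
  calc E.card ≤ _ := Finset.card_le_card hsub
    _ ≤ (Finset.univ : Finset (Fin i)).card := Finset.card_image_le
    _ = i := by simp

lemma lexTop_downset {E : Finset (Fin i ⊕ₗ β)}
    (hd : ∀ ⦃x y : Fin i ⊕ₗ β⦄, x ∈ E → y ≤ x → y ∈ E) :
    ∀ ⦃p q : β⦄, p ∈ lexTop E → q ≤ p → q ∈ lexTop E := by
  intro p q hp hq
  exact mem_lexTop.2 (hd (mem_lexTop.1 hp) (Sum.Lex.inr_le_inr_iff.2 hq))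

lemma lexTop_nonempty {E : Finset (Fin i ⊕ₗ β)} {p : β}
    (hp : toLex (Sum.inr p) ∈ E) : (lexTop E).Nonempty :=
  ⟨p, mem_lexTop.2 hp⟩

end LexDownset

section SplitIso

variable {α β : Type} [PartialOrder α] [PartialOrder β]

/-- Splitting a subset of a disjoint union into its two parts. -/
def splitIso (D : Finset (α ⊕ β)) :
    {x : α ⊕ β // x ∈ D} ≃o ({a : α // a ∈ D.toLeft} ⊕ {b : β // b ∈ D.toRight}) where
  toFun x := match x with
    | ⟨Sum.inl a, h⟩ => Sum.inl ⟨a, Finset.mem_toLeft.2 h⟩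
    | ⟨Sum.inr b, h⟩ => Sum.inr ⟨b, Finset.mem_toRight.2 h⟩
  invFun y := match y with
    | Sum.inl a => ⟨Sum.inl a.1, Finset.mem_toLeft.1 a.2⟩
    | Sum.inr b => ⟨Sum.inr b.1, Finset.mem_toRight.1 b.2⟩
  left_inv := by rintro ⟨a | b, h⟩ <;> rfl
  right_inv := by rintro (⟨a, ha⟩ | ⟨b, hb⟩) <;> rfl
  map_rel_iff' := by
    rintro ⟨a | a, ha⟩ ⟨b | b, hb⟩
    · exact (Sum.inl_le_inl_iff.trans Subtype.mk_le_mk).trans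
        ((Subtype.mk_le_mk.trans Sum.inl_le_inl_iff).symm)
    · exact iff_of_false Sum.not_inl_le_inr
        (fun h => Sum.not_inl_le_inr (Subtype.mk_le_mk.1 h))
    · exact iff_of_false Sum.not_inr_le_inl
        (fun h => Sum.not_inr_le_inl (Subtype.mk_le_mk.1 h))
    · exact (Sum.inr_le_inr_iff.trans Subtype.mk_le_mk).trans
        ((Subtype.mk_le_mk.trans Sum.inr_le_inr_iff).symm)

end SplitIso

section Model

variable {γ : Type} [PartialOrder γ] [Fintype γ] {i b : ℕ}

lemma bc_model_inl_inl (j : Fin i) :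
    bc (Sum.inl (toLex (Sum.inl j)) : (Fin i ⊕ₗ γ) ⊕ Fin b) ≤ i := by
  have hsub : Finset.univ.filter
      (fun y : (Fin i ⊕ₗ γ) ⊕ Fin b => y ≤ Sum.inl (toLex (Sum.inl j)))
      ⊆ Finset.univ.image (fun j' : Fin i => (Sum.inl (toLex (Sum.inl j')) : _)) := by
    intro y hy
    rw [Finset.mem_filter] at hy
    rcases y with x | jb
    · rcases x with j' | p
      · simp only [Finset.mem_image, Finset.mem_univ, true_and]
        exact ⟨j', rfl⟩
      · exact absurd (Sum.inl_le_inl_iff.1 hy.2) Sum.Lex.not_inr_le_inl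
    · exact absurd hy.2 Sum.not_inr_le_inl
  calc bc _ ≤ _ := Finset.card_le_card hsub
    _ ≤ (Finset.univ : Finset (Fin i)).card := Finset.card_image_le
    _ = i := by simp

lemma bc_model_inl_inr (p : γ) :
    i < bc (Sum.inl (toLex (Sum.inr p)) : (Fin i ⊕ₗ γ) ⊕ Fin b) := by
  have hsub : insert (Sum.inl (toLex (Sum.inr p)) : (Fin i ⊕ₗ γ) ⊕ Fin b)
      (Finset.univ.image (fun j : Fin i => (Sum.inl (toLex (Sum.inl j)) : _)))
      ⊆ Finset.univ.filter
        (fun y : (Fin i ⊕ₗ γ) ⊕ Fin b => y ≤ Sum.inl (toLex (Sum.inr p))) := by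
    intro y hy
    rw [Finset.mem_insert] at hy
    rcases hy with rfl | hy
    · simp
    · simp only [Finset.mem_image, Finset.mem_univ, true_and] at hy
      obtain ⟨j, rfl⟩ := hy
      simp only [Finset.mem_filter, Finset.mem_univ, true_and]
      exact Sum.inl_le_inl_iff.2 (Sum.Lex.inl_le_inr j p)
  have hcard := Finset.card_le_card hsub
  have hinj : Function.Injective
      (fun j : Fin i => (Sum.inl (toLex (Sum.inl j)) : (Fin i ⊕ₗ γ) ⊕ Fin b)) :=
    fun a b hab => Sum.inl.inj (Sum.inl.inj hab)
  rw [Finset.card_insert_of_notMem, Finset.card_image_of_injective _ hinj] at hcard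
  · simpa [bc] using hcard
  · simp only [Finset.mem_image, Finset.mem_univ, true_and]
    rintro ⟨j, hj⟩
    exact Sum.inl_ne_inr (Sum.inl.inj hj)

lemma bc_model_inr (j : Fin b) :
    bc (Sum.inr j : (Fin i ⊕ₗ γ) ⊕ Fin b) ≤ b := by
  have hsub : Finset.univ.filter
      (fun y : (Fin i ⊕ₗ γ) ⊕ Fin b => y ≤ Sum.inr j)
      ⊆ Finset.univ.image (fun j' : Fin b => (Sum.inr j' : (Fin i ⊕ₗ γ) ⊕ Fin b)) := by
    intro y hy
    rw [Finset.mem_filter] at hy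
    rcases y with x | jb
    · exact absurd hy.2 Sum.not_inl_le_inr
    · simp only [Finset.mem_image, Finset.mem_univ, true_and]
      exact ⟨jb, rfl⟩
  calc bc _ ≤ _ := Finset.card_le_card hsub
    _ ≤ (Finset.univ : Finset (Fin b)).card := Finset.card_image_le
    _ = b := by simp

/-- The elements of the mixed model with more than `i` elements below form a copy of `γ`. -/
noncomputable def modelSubtypeIso (γ : Type) [PartialOrder γ] [Fintype γ] (i b : ℕ)
    (hb : b ≤ i) : γ ≃o {x : (Fin i ⊕ₗ γ) ⊕ Fin b // i < bc x} := by
  have hginj : Function.Injective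
      (fun p : γ => (⟨Sum.inl (toLex (Sum.inr p)), bc_model_inl_inr p⟩ :
        {x : (Fin i ⊕ₗ γ) ⊕ Fin b // i < bc x})) := by
    intro p q hpq
    exact Sum.inr.inj (Sum.inl.inj (congrArg Subtype.val hpq))
  have hgsurj : Function.Surjective
      (fun p : γ => (⟨Sum.inl (toLex (Sum.inr p)), bc_model_inl_inr p⟩ :
        {x : (Fin i ⊕ₗ γ) ⊕ Fin b // i < bc x})) := by
    rintro ⟨x, hx⟩
    rcases x with y | j
    · rcases y with j | p
      · exact absurd hx (not_lt.2 (bc_model_inl_inl j))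
      · exact ⟨p, Subtype.ext rfl⟩
    · exact absurd hx (not_lt.2 (le_trans (bc_model_inr j) hb))
  exact
    { toEquiv := Equiv.ofBijective _ ⟨hginj, hgsurj⟩
      map_rel_iff' := by
        intro p q
        show (⟨Sum.inl (toLex (Sum.inr p)), _⟩ :
          {x : (Fin i ⊕ₗ γ) ⊕ Fin b // i < bc x}) ≤ ⟨Sum.inl (toLex (Sum.inr q)), _⟩ ↔ p ≤ q
        exact Subtype.mk_le_mk.trans (Sum.inl_le_inl_iff.trans Sum.Lex.inr_le_inr_iff) }

lemma model_inj {γ δ : Type} [PartialOrder γ] [Fintype γ] [PartialOrder δ] [Fintype δ]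
    {i b b' : ℕ} (hb : b ≤ i) (hb' : b' ≤ i)
    (h : Nonempty ((Fin i ⊕ₗ γ) ⊕ Fin b ≃o (Fin i ⊕ₗ δ) ⊕ Fin b')) :
    Nonempty (γ ≃o δ) := by
  obtain ⟨e⟩ := h
  exact ⟨(modelSubtypeIso γ i b hb).trans
    ((bcSubtypeIso e i).trans (modelSubtypeIso δ i b' hb').symm)⟩

lemma bc_chain_inl {a b : ℕ} (j : Fin a) :
    bc (Sum.inl j : Fin a ⊕ Fin b) = (j : ℕ) + 1 := by
  have himg : Finset.univ.filter (fun y : Fin a ⊕ Fin b => y ≤ Sum.inl j)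
      = (Finset.Iic j).image Sum.inl := by
    ext y
    rcases y with j' | j'
    · simp only [Finset.mem_filter, Finset.mem_univ, true_and, Finset.mem_image,
        Finset.mem_Iic, Sum.inl_le_inl_iff]
      constructor
      · intro h; exact ⟨j', h, rfl⟩
      · rintro ⟨k, hk, hkj⟩; obtain rfl : k = j' := Sum.inl.inj hkj; exact hk
    · simp only [Finset.mem_filter, Finset.mem_univ, true_and, Finset.mem_image,
        Finset.mem_Iic]
      constructor
      · intro h; exact absurd h Sum.not_inr_le_inl
      · rintro ⟨k, _, hkj⟩; exact (Sum.inl_ne_inr hkj).elim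
  rw [bc, himg, Finset.card_image_of_injective _ Sum.inl_injective, Fin.card_Iic]

lemma bc_chain_inr {a b : ℕ} (j : Fin b) :
    bc (Sum.inr j : Fin a ⊕ Fin b) = (j : ℕ) + 1 := by
  have himg : Finset.univ.filter (fun y : Fin a ⊕ Fin b => y ≤ Sum.inr j)
      = (Finset.Iic j).image Sum.inr := by
    ext y
    rcases y with j' | j'
    · simp only [Finset.mem_filter, Finset.mem_univ, true_and, Finset.mem_image,
        Finset.mem_Iic]
      constructor
      · intro h; exact absurd h Sum.not_inl_le_inr
      · rintro ⟨k, _, hkj⟩; exact (Sum.inr_ne_inl hkj).elim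
    · simp only [Finset.mem_filter, Finset.mem_univ, true_and, Finset.mem_image,
        Finset.mem_Iic, Sum.inr_le_inr_iff]
      constructor
      · intro h; exact ⟨j', h, rfl⟩
      · rintro ⟨k, hk, hkj⟩; obtain rfl : k = j' := Sum.inr.inj hkj; exact hk
  rw [bc, himg, Finset.card_image_of_injective _ Sum.inr_injective, Fin.card_Iic]

lemma model_not_chain {γ : Type} [PartialOrder γ] [Fintype γ] {i b a a' : ℕ}
    (hc : Nonempty γ) (ha : a ≤ i) (ha' : a' ≤ i) :
    ¬ Nonempty ((Fin i ⊕ₗ γ) ⊕ Fin b ≃o Fin a ⊕ Fin a') := by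
  rintro ⟨e⟩
  obtain ⟨p⟩ := hc
  have h1 := bc_model_inl_inr (i := i) (b := b) p
  have h2 := bc_iso e (Sum.inl (toLex (Sum.inr p)))
  rcases hy : e (Sum.inl (toLex (Sum.inr p))) with j | j
  · rw [hy, bc_chain_inl] at h2
    have := j.isLt; omega
  · rw [hy, bc_chain_inr] at h2
    have := j.isLt; omega

lemma chains_le {a b a' b' : ℕ} (e : Fin a ⊕ Fin b ≃o Fin a' ⊕ Fin b')
    (ha' : a' ≤ b') : b ≤ b' := by
  have hcount := card_bc_gt e b'
  have hR : (Finset.univ.filter (fun y : Fin a' ⊕ Fin b' => b' < bc y)).card = 0 := by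
    rw [Finset.card_eq_zero, Finset.filter_eq_empty_iff]
    intro y _
    rcases y with j | j
    · rw [bc_chain_inl]; have := j.isLt; omega
    · rw [bc_chain_inr]; have := j.isLt; omega
  by_contra hbb
  push_neg at hbb
  have hmem : (Sum.inr (⟨b', hbb⟩ : Fin b) : Fin a ⊕ Fin b)
      ∈ Finset.univ.filter (fun x : Fin a ⊕ Fin b => b' < bc x) := by
    rw [Finset.mem_filter]
    refine ⟨Finset.mem_univ _, ?_⟩
    rw [bc_chain_inr]
    simp
  have := Finset.card_pos.2 ⟨_, hmem⟩
  omega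

end Model

section Models

/-- The model poset: `c` above a chain of `i`, next to a chain of `b`. -/
def modelMixed (c : FinPartOrd.{0}) (i b : ℕ) : FinPartOrd.{0} :=
  disjSum (withChain c i) (chainP b)

/-- The model poset made of two chains. -/
def modelChains (a b : ℕ) : FinPartOrd.{0} := disjSum (chainP a) (chainP b)

example (c : FinPartOrd.{0}) (i b : ℕ) :
    ((Fin i ⊕ₗ ↥c) ⊕ Fin b) ≃o ↥(modelMixed c i b) := OrderIso.refl _

example (a b : ℕ) : (Fin a ⊕ Fin b) ≃o ↥(modelChains a b) := OrderIso.refl _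

/-- The map sending (the class of) a nonempty downset `c` of `P₀` to the class of the
corresponding size-`(m+i+1)` downset of `P_iR_i`. -/
def fMap (i m : ℕ) (c : FinPartOrd.{0}) : UPoset := cls (modelMixed c i (m + 1 - size c))

def fU (i m : ℕ) : UPoset → UPoset :=
  Quotient.lift (fMap i m) (by
    intro c c' h
    obtain ⟨e⟩ := h
    have hsize : size c = size c' := Fintype.card_congr e.toEquiv
    unfold fMap
    rw [hsize]
    exact cls_eq_iff.2
      ⟨sumIsoCongr (sumLexIsoCongr (OrderIso.refl (Fin i)) e)
        (OrderIso.refl (Fin (m + 1 - size c')))⟩)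

lemma fU_cls (i m : ℕ) (c : FinPartOrd.{0}) : fU i m (cls c) = fMap i m c := rfl

/-- The class of the union of two chains of lengths `a` and `n - a`. -/
def hM (n a : ℕ) : UPoset := cls (modelChains a (n - a))

lemma cls_modelChains_comm (a b : ℕ) : cls (modelChains a b) = cls (modelChains b a) :=
  cls_eq_iff.2 ⟨OrderIso.sumComm (Fin a) (Fin b)⟩

lemma DAllSet_finite (P : FinPartOrd.{0}) : (DAllSet P).Finite := by
  apply Set.Finite.subset (Set.finite_range (fun D : Finset ↥P => cls (subposet P D)))
  rintro c ⟨D, _, _, rfl⟩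
  exact ⟨D, rfl⟩

lemma size_subposet (P : FinPartOrd.{0}) (D : Finset ↥P) : size (subposet P D) = D.card :=
  Fintype.card_coe D

lemma usize_pos_of_mem {P : FinPartOrd.{0}} {c : UPoset} (h : c ∈ DAllSet P) :
    1 ≤ usize c := by
  obtain ⟨D, _, hne, rfl⟩ := h
  rw [usize_cls, size_subposet]
  exact Finset.card_pos.2 hne

end Models

section Constructions

variable {α β : Type} [PartialOrder α] [PartialOrder β] [Fintype β]

/-- The first `t` elements of the bottom chain in `Fin i ⊕ₗ β`. -/
def chainPrefix (i t : ℕ) (β : Type) [PartialOrder β] : Finset (Fin i ⊕ₗ β) :=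
  (Finset.univ.filter (fun j : Fin i => (j : ℕ) < t)).image (fun j => toLex (Sum.inl j))

lemma mem_chainPrefix {i t : ℕ} {x : Fin i ⊕ₗ β} :
    x ∈ chainPrefix i t β ↔ ∃ j : Fin i, (j : ℕ) < t ∧ x = toLex (Sum.inl j) := by
  simp only [chainPrefix, Finset.mem_image, Finset.mem_filter, Finset.mem_univ, true_and]
  constructor
  · rintro ⟨j, hj, rfl⟩; exact ⟨j, hj, rfl⟩
  · rintro ⟨j, hj, rfl⟩; exact ⟨j, hj, rfl⟩

lemma chainPrefix_card {i t : ℕ} (h : t ≤ i) : (chainPrefix i t β).card = t := by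
  have hinj : Function.Injective (fun j : Fin i => (toLex (Sum.inl j) : Fin i ⊕ₗ β)) :=
    fun a b hab => Sum.inl.inj hab
  rw [chainPrefix, Finset.card_image_of_injective _ hinj, fin_filter_lt_card t i h]

lemma chainPrefix_no_inr {i t : ℕ} (p : β) : toLex (Sum.inr p) ∉ chainPrefix i t β := by
  rw [mem_chainPrefix]
  rintro ⟨j, _, hj⟩
  exact Sum.inr_ne_inl hj

lemma chainPrefix_downset {i t : ℕ} :
    ∀ ⦃x y : Fin i ⊕ₗ β⦄, x ∈ chainPrefix i t β → y ≤ x → y ∈ chainPrefix i t β := by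
  intro x y hx hle
  rw [mem_chainPrefix] at hx
  obtain ⟨j, hj, rfl⟩ := hx
  rcases y with j' | q
  · have h' : j' ≤ j := Sum.Lex.inl_le_inl_iff.1 hle
    exact mem_chainPrefix.2 ⟨j', lt_of_le_of_lt (Nat.le_of_lt_succ (Nat.lt_succ_of_le h')) hj, rfl⟩
  · exact absurd hle Sum.Lex.not_inr_le_inl

/-- The whole bottom chain together with a downset of the top part. -/
def lowerFull (i : ℕ) (D₀ : Finset β) : Finset (Fin i ⊕ₗ β) :=
  (Finset.univ.image (fun j : Fin i => toLex (Sum.inl j)))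
    ∪ (D₀.image (fun p => toLex (Sum.inr p)))

lemma mem_lowerFull {i : ℕ} {D₀ : Finset β} {x : Fin i ⊕ₗ β} :
    x ∈ lowerFull i D₀ ↔ (∃ j : Fin i, x = toLex (Sum.inl j)) ∨
      ∃ p ∈ D₀, x = toLex (Sum.inr p) := by
  simp only [lowerFull, Finset.mem_union, Finset.mem_image, Finset.mem_univ, true_and]
  constructor
  · rintro (⟨j, rfl⟩ | ⟨p, hp, rfl⟩)
    · exact Or.inl ⟨j, rfl⟩
    · exact Or.inr ⟨p, hp, rfl⟩
  · rintro (⟨j, rfl⟩ | ⟨p, hp, rfl⟩)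
    · exact Or.inl ⟨j, rfl⟩
    · exact Or.inr ⟨p, hp, rfl⟩

lemma lowerFull_all_inl {i : ℕ} (D₀ : Finset β) (j : Fin i) :
    toLex (Sum.inl j) ∈ lowerFull i D₀ :=
  mem_lowerFull.2 (Or.inl ⟨j, rfl⟩)

lemma lexTop_lowerFull {i : ℕ} (D₀ : Finset β) : lexTop (lowerFull i D₀) = D₀ := by
  ext p
  rw [mem_lexTop, mem_lowerFull]
  constructor
  · rintro (⟨j, hj⟩ | ⟨p', hp', h⟩)
    · exact (Sum.inr_ne_inl hj).elim
    · have hpe : p = p' := Sum.inr.inj h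
      rw [hpe]; exact hp'
  · intro hp
    exact Or.inr ⟨p, hp, rfl⟩

lemma lowerFull_downset {i : ℕ} {D₀ : Finset β}
    (hd : ∀ ⦃p q : β⦄, p ∈ D₀ → q ≤ p → q ∈ D₀) :
    ∀ ⦃x y : Fin i ⊕ₗ β⦄, x ∈ lowerFull i D₀ → y ≤ x → y ∈ lowerFull i D₀ := by
  intro x y hx hle
  rcases y with j' | q
  · exact lowerFull_all_inl D₀ j'
  · cases x with | h x => ?_
    rcases x with j | p
    · exact absurd hle Sum.Lex.not_inr_le_inl
    · have hq : q ≤ p := Sum.Lex.inr_le_inr_iff.1 hle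
      rw [mem_lowerFull] at hx
      rcases hx with ⟨j, hj⟩ | ⟨p', hp', h⟩
      · exact (Sum.inr_ne_inl hj).elim
      · have hpe : p = p' := Sum.inr.inj h
        subst hpe
        exact mem_lowerFull.2 (Or.inr ⟨q, hd hp' hq, rfl⟩)

/-- Combining subsets of the two parts of a disjoint union. -/
def combineD (S : Finset α) (T : Finset β) : Finset (α ⊕ β) :=
  S.image Sum.inl ∪ T.image Sum.inr

lemma combineD_toLeft (S : Finset α) (T : Finset β) : (combineD S T).toLeft = S := by
  ext x
  simp [combineD, Finset.mem_toLeft]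

lemma combineD_toRight (S : Finset α) (T : Finset β) : (combineD S T).toRight = T := by
  ext x
  simp [combineD, Finset.mem_toRight]

lemma combineD_downset {S : Finset α} {T : Finset β}
    (hS : ∀ ⦃x y : α⦄, x ∈ S → y ≤ x → y ∈ S)
    (hT : ∀ ⦃x y : β⦄, x ∈ T → y ≤ x → y ∈ T) :
    ∀ ⦃x y : α ⊕ β⦄, x ∈ combineD S T → y ≤ x → y ∈ combineD S T := by
  intro x y hx hle
  rcases x with x | x <;> rcases y with y | y
  · rw [← Finset.mem_toLeft, combineD_toLeft] at hx ⊢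
    exact hS hx (Sum.inl_le_inl_iff.1 hle)
  · exact absurd hle Sum.not_inr_le_inl
  · exact absurd hle Sum.not_inl_le_inr
  · rw [← Finset.mem_toRight, combineD_toRight] at hx ⊢
    exact hT hx (Sum.inr_le_inr_iff.1 hle)

lemma combineD_card (S : Finset α) (T : Finset β) :
    (combineD S T).card = S.card + T.card := by
  have hdis : Disjoint (S.image (Sum.inl : α → α ⊕ β)) (T.image Sum.inr) := by
    rw [Finset.disjoint_left]
    rintro x hx hx'
    simp only [Finset.mem_image] at hx hx'
    obtain ⟨y, _, rfl⟩ := hx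
    obtain ⟨z, _, h⟩ := hx'
    exact Sum.inr_ne_inl h
  rw [combineD, Finset.card_union_of_disjoint hdis,
    Finset.card_image_of_injective _ Sum.inl_injective,
    Finset.card_image_of_injective _ Sum.inr_injective]

end Constructions

section Classify

variable (P₀ R₀ : FinPartOrd.{0}) (i : ℕ)

/-- View a finset of the ladder poset as a finset of a disjoint union. -/
def sumView (D : Finset ↥(PRposet P₀ R₀ i)) :
    Finset ((Fin i ⊕ₗ ↥P₀) ⊕ (Fin i ⊕ₗ ↥R₀)) := D

lemma sumView_combine (S : Finset (Fin i ⊕ₗ ↥P₀)) (T : Finset (Fin i ⊕ₗ ↥R₀)) :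
    sumView P₀ R₀ i (combineD S T) = combineD S T := rfl

lemma sumView_card (D : Finset ↥(PRposet P₀ R₀ i)) :
    (sumView P₀ R₀ i D).toLeft.card + (sumView P₀ R₀ i D).toRight.card = D.card :=
  Finset.card_toLeft_add_card_toRight (u := sumView P₀ R₀ i D)

lemma sumView_downset_left {D : Finset ↥(PRposet P₀ R₀ i)}
    (hd : IsDownset (PRposet P₀ R₀ i) D) :
    ∀ ⦃x y : Fin i ⊕ₗ ↥P₀⦄, x ∈ (sumView P₀ R₀ i D).toLeft → y ≤ x →
      y ∈ (sumView P₀ R₀ i D).toLeft := by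
  intro x y hx hy
  rw [Finset.mem_toLeft] at hx ⊢
  exact hd hx (Sum.inl_le_inl_iff.2 hy)

lemma sumView_downset_right {D : Finset ↥(PRposet P₀ R₀ i)}
    (hd : IsDownset (PRposet P₀ R₀ i) D) :
    ∀ ⦃x y : Fin i ⊕ₗ ↥R₀⦄, x ∈ (sumView P₀ R₀ i D).toRight → y ≤ x →
      y ∈ (sumView P₀ R₀ i D).toRight := by
  intro x y hx hy
  rw [Finset.mem_toRight] at hx ⊢
  exact hd hx (Sum.inr_le_inr_iff.2 hy)

lemma classifyA {D : Finset ↥(PRposet P₀ R₀ i)} (hd : IsDownset (PRposet P₀ R₀ i) D)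
    {p : ↥P₀} (hp : toLex (Sum.inr p) ∈ (sumView P₀ R₀ i D).toLeft)
    (hRno : ∀ q : ↥R₀, toLex (Sum.inr q) ∉ (sumView P₀ R₀ i D).toRight) :
    cls (subposet (PRposet P₀ R₀ i) D)
      = cls (modelMixed (subposet P₀ (lexTop (sumView P₀ R₀ i D).toLeft)) i
          (sumView P₀ R₀ i D).toRight.card)
    ∧ D.card = i + (lexTop (sumView P₀ R₀ i D).toLeft).card
        + (sumView P₀ R₀ i D).toRight.card := by
  have hdL := sumView_downset_left P₀ R₀ i hd
  have hdR := sumView_downset_right P₀ R₀ i hd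
  have hAll : ∀ j : Fin i, toLex (Sum.inl j) ∈ (sumView P₀ R₀ i D).toLeft :=
    all_inl_mem hdL hp
  have e1 := lexSplitIso (sumView P₀ R₀ i D).toLeft hAll
  obtain ⟨e2⟩ : Nonempty
      ({x // x ∈ (sumView P₀ R₀ i D).toRight} ≃o Fin (sumView P₀ R₀ i D).toRight.card) :=
    linear_iso_fin (fun x y => lex_chain_tot hRno x.1 x.2 y.1 y.2) (Fintype.card_coe _)
  constructor
  · exact cls_eq_iff.2 ⟨(splitIso (sumView P₀ R₀ i D)).trans (sumIsoCongr e1 e2)⟩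
  · rw [← sumView_card P₀ R₀ i D, lex_card hAll]

lemma classifyB {D : Finset ↥(PRposet P₀ R₀ i)} (hd : IsDownset (PRposet P₀ R₀ i) D)
    {q : ↥R₀} (hq : toLex (Sum.inr q) ∈ (sumView P₀ R₀ i D).toRight)
    (hLno : ∀ p : ↥P₀, toLex (Sum.inr p) ∉ (sumView P₀ R₀ i D).toLeft) :
    cls (subposet (PRposet P₀ R₀ i) D)
      = cls (modelMixed (subposet R₀ (lexTop (sumView P₀ R₀ i D).toRight)) i
          (sumView P₀ R₀ i D).toLeft.card)
    ∧ D.card = i + (lexTop (sumView P₀ R₀ i D).toRight).card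
        + (sumView P₀ R₀ i D).toLeft.card := by
  have hdL := sumView_downset_left P₀ R₀ i hd
  have hdR := sumView_downset_right P₀ R₀ i hd
  have hAll : ∀ j : Fin i, toLex (Sum.inl j) ∈ (sumView P₀ R₀ i D).toRight :=
    all_inl_mem hdR hq
  have e1 := lexSplitIso (sumView P₀ R₀ i D).toRight hAll
  obtain ⟨e2⟩ : Nonempty
      ({x // x ∈ (sumView P₀ R₀ i D).toLeft} ≃o Fin (sumView P₀ R₀ i D).toLeft.card) :=
    linear_iso_fin (fun x y => lex_chain_tot hLno x.1 x.2 y.1 y.2) (Fintype.card_coe _)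
  constructor
  · exact cls_eq_iff.2 ⟨((splitIso (sumView P₀ R₀ i D)).trans (sumIsoCongr e2 e1)).trans
      (OrderIso.sumComm _ _)⟩
  · rw [← sumView_card P₀ R₀ i D, lex_card hAll]
    omega

lemma classifyC {D : Finset ↥(PRposet P₀ R₀ i)}
    (hLno : ∀ p : ↥P₀, toLex (Sum.inr p) ∉ (sumView P₀ R₀ i D).toLeft)
    (hRno : ∀ q : ↥R₀, toLex (Sum.inr q) ∉ (sumView P₀ R₀ i D).toRight) :
    cls (subposet (PRposet P₀ R₀ i) D)
      = cls (modelChains (sumView P₀ R₀ i D).toLeft.card (sumView P₀ R₀ i D).toRight.card)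
    ∧ (sumView P₀ R₀ i D).toLeft.card ≤ i ∧ (sumView P₀ R₀ i D).toRight.card ≤ i
    ∧ D.card = (sumView P₀ R₀ i D).toLeft.card + (sumView P₀ R₀ i D).toRight.card := by
  obtain ⟨e1⟩ : Nonempty
      ({x // x ∈ (sumView P₀ R₀ i D).toLeft} ≃o Fin (sumView P₀ R₀ i D).toLeft.card) :=
    linear_iso_fin (fun x y => lex_chain_tot hLno x.1 x.2 y.1 y.2) (Fintype.card_coe _)
  obtain ⟨e2⟩ : Nonempty
      ({x // x ∈ (sumView P₀ R₀ i D).toRight} ≃o Fin (sumView P₀ R₀ i D).toRight.card) :=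
    linear_iso_fin (fun x y => lex_chain_tot hRno x.1 x.2 y.1 y.2) (Fintype.card_coe _)
  refine ⟨cls_eq_iff.2 ⟨(splitIso (sumView P₀ R₀ i D)).trans (sumIsoCongr e1 e2)⟩,
    lex_chain_card_le hLno, lex_chain_card_le hRno, (sumView_card P₀ R₀ i D).symm⟩

end Classify

section MainCount

lemma main_count (m : ℕ) (P₀ R₀ : FinPartOrd.{0}) (hP : size P₀ = m) (hR : size R₀ = m)
    (i : ℕ) (him : m ≤ i) :
    dNum (m + i + 1) (PRposet P₀ R₀ i) = CNum P₀ R₀ + (i - m + 1) / 2 := by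
  have hcardP : (Finset.univ : Finset ↥P₀).card = m := by
    rw [Finset.card_univ]; exact hP
  have hcardR : (Finset.univ : Finset ↥R₀).card = m := by
    rw [Finset.card_univ]; exact hR
  set n := m + i + 1 with hn
  have key : DSet n (PRposet P₀ R₀ i)
      = (fU i m '' (DAllSet P₀ ∪ DAllSet R₀))
        ∪ (hM n '' ↑(Finset.Icc (m + 1) (n / 2))) := by
    ext c
    constructor
    · rintro ⟨D, hD, hcard, rfl⟩
      by_cases hL : ∃ p : ↥P₀, toLex (Sum.inr p) ∈ (sumView P₀ R₀ i D).toLeft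
      · by_cases hRc : ∃ q : ↥R₀, toLex (Sum.inr q) ∈ (sumView P₀ R₀ i D).toRight
        · exfalso
          obtain ⟨p, hp⟩ := hL
          obtain ⟨q, hq⟩ := hRc
          have h1 := lex_card (all_inl_mem (sumView_downset_left P₀ R₀ i hD) hp)
          have h2 := lex_card (all_inl_mem (sumView_downset_right P₀ R₀ i hD) hq)
          have h3 := sumView_card P₀ R₀ i D
          have h4 : 1 ≤ (lexTop (sumView P₀ R₀ i D).toLeft).card :=
            Finset.card_pos.2 ⟨p, mem_lexTop.2 hp⟩
          have h5 : 1 ≤ (lexTop (sumView P₀ R₀ i D).toRight).card :=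
            Finset.card_pos.2 ⟨q, mem_lexTop.2 hq⟩
          omega
        · push_neg at hRc
          obtain ⟨p, hp⟩ := hL
          obtain ⟨hcls, hcards⟩ := classifyA P₀ R₀ i hD hp hRc
          have hk1 : 1 ≤ (lexTop (sumView P₀ R₀ i D).toLeft).card :=
            Finset.card_pos.2 ⟨p, mem_lexTop.2 hp⟩
          have hkm : (lexTop (sumView P₀ R₀ i D).toLeft).card ≤ m :=
            le_trans (Finset.card_le_univ _) (le_of_eq hcardP)
          have hb : (sumView P₀ R₀ i D).toRight.card
              = m + 1 - (lexTop (sumView P₀ R₀ i D).toLeft).card := by omega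
          left
          refine ⟨cls (subposet P₀ (lexTop (sumView P₀ R₀ i D).toLeft)),
            Or.inl ⟨lexTop (sumView P₀ R₀ i D).toLeft,
              lexTop_downset (sumView_downset_left P₀ R₀ i hD),
              ⟨p, mem_lexTop.2 hp⟩, rfl⟩, ?_⟩
          rw [fU_cls]
          unfold fMap
          rw [size_subposet, ← hb]
          exact hcls.symm
      · by_cases hRc : ∃ q : ↥R₀, toLex (Sum.inr q) ∈ (sumView P₀ R₀ i D).toRight
        · push_neg at hL
          obtain ⟨q, hq⟩ := hRc
          obtain ⟨hcls, hcards⟩ := classifyB P₀ R₀ i hD hq hL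
          have hk1 : 1 ≤ (lexTop (sumView P₀ R₀ i D).toRight).card :=
            Finset.card_pos.2 ⟨q, mem_lexTop.2 hq⟩
          have hkm : (lexTop (sumView P₀ R₀ i D).toRight).card ≤ m :=
            le_trans (Finset.card_le_univ _) (le_of_eq hcardR)
          have hb : (sumView P₀ R₀ i D).toLeft.card
              = m + 1 - (lexTop (sumView P₀ R₀ i D).toRight).card := by omega
          left
          refine ⟨cls (subposet R₀ (lexTop (sumView P₀ R₀ i D).toRight)),
            Or.inr ⟨lexTop (sumView P₀ R₀ i D).toRight,
              lexTop_downset (sumView_downset_right P₀ R₀ i hD),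
              ⟨q, mem_lexTop.2 hq⟩, rfl⟩, ?_⟩
          rw [fU_cls]
          unfold fMap
          rw [size_subposet, ← hb]
          exact hcls.symm
        · push_neg at hL hRc
          obtain ⟨hcls, haL, haR, hsum⟩ := classifyC P₀ R₀ i hL hRc
          right
          rcases le_total (sumView P₀ R₀ i D).toLeft.card (sumView P₀ R₀ i D).toRight.card
            with hab | hab
          · refine ⟨(sumView P₀ R₀ i D).toLeft.card, ?_, ?_⟩
            · rw [Finset.mem_coe, Finset.mem_Icc]; omega
            · unfold hM
              rw [show n - (sumView P₀ R₀ i D).toLeft.card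
                  = (sumView P₀ R₀ i D).toRight.card from by omega]
              exact hcls.symm
          · refine ⟨(sumView P₀ R₀ i D).toRight.card, ?_, ?_⟩
            · rw [Finset.mem_coe, Finset.mem_Icc]; omega
            · unfold hM
              rw [show n - (sumView P₀ R₀ i D).toRight.card
                  = (sumView P₀ R₀ i D).toLeft.card from by omega]
              rw [cls_modelChains_comm]
              exact hcls.symm
    · rintro (⟨c₀, hc₀, rfl⟩ | ⟨a, ha, rfl⟩)
      · rcases hc₀ with hcP | hcR
        · obtain ⟨D₀, hD₀d, hD₀ne, rfl⟩ := hcP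
          have hk1 : 1 ≤ D₀.card := Finset.card_pos.2 hD₀ne
          have hkm : D₀.card ≤ m := le_trans (Finset.card_le_univ _) (le_of_eq hcardP)
          have hbi : m + 1 - D₀.card ≤ i := by omega
          obtain ⟨p, hp₀⟩ := hD₀ne
          have hdown : IsDownset (PRposet P₀ R₀ i)
              (combineD (lowerFull i D₀) (chainPrefix i (m + 1 - D₀.card) (↥R₀))) :=
            combineD_downset (lowerFull_downset hD₀d) chainPrefix_downset
          refine ⟨combineD (lowerFull i D₀) (chainPrefix i (m + 1 - D₀.card) (↥R₀)),
            hdown, ?_, ?_⟩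
          · have h1 : (lowerFull i D₀).card = i + D₀.card := by
              rw [lex_card (lowerFull_all_inl D₀), lexTop_lowerFull]
            have h2 := chainPrefix_card (β := ↥R₀) hbi
            refine (combineD_card (α := Fin i ⊕ₗ ↥P₀) (β := Fin i ⊕ₗ ↥R₀) _ _).trans ?_
            rw [h1, h2]
            omega
          · have hp : toLex (Sum.inr p) ∈ (sumView P₀ R₀ i (combineD (lowerFull i D₀)
                (chainPrefix i (m + 1 - D₀.card) (↥R₀)))).toLeft := by
              rw [sumView_combine, combineD_toLeft]
              exact mem_lowerFull.2 (Or.inr ⟨p, hp₀, rfl⟩)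
            have hRno : ∀ q : ↥R₀, toLex (Sum.inr q) ∉ (sumView P₀ R₀ i (combineD
                (lowerFull i D₀) (chainPrefix i (m + 1 - D₀.card) (↥R₀)))).toRight := by
              intro q
              rw [sumView_combine, combineD_toRight]
              exact chainPrefix_no_inr q
            obtain ⟨hcls, -⟩ := classifyA P₀ R₀ i hdown hp hRno
            rw [hcls, sumView_combine, combineD_toLeft, combineD_toRight, lexTop_lowerFull,
              chainPrefix_card hbi, fU_cls]
            unfold fMap
            rw [size_subposet]
        · obtain ⟨D₀, hD₀d, hD₀ne, rfl⟩ := hcR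
          have hk1 : 1 ≤ D₀.card := Finset.card_pos.2 hD₀ne
          have hkm : D₀.card ≤ m := le_trans (Finset.card_le_univ _) (le_of_eq hcardR)
          have hbi : m + 1 - D₀.card ≤ i := by omega
          obtain ⟨q, hq₀⟩ := hD₀ne
          have hdown : IsDownset (PRposet P₀ R₀ i)
              (combineD (chainPrefix i (m + 1 - D₀.card) (↥P₀)) (lowerFull i D₀)) :=
            combineD_downset chainPrefix_downset (lowerFull_downset hD₀d)
          refine ⟨combineD (chainPrefix i (m + 1 - D₀.card) (↥P₀)) (lowerFull i D₀),
            hdown, ?_, ?_⟩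
          · have h1 : (lowerFull i D₀).card = i + D₀.card := by
              rw [lex_card (lowerFull_all_inl D₀), lexTop_lowerFull]
            have h2 := chainPrefix_card (β := ↥P₀) hbi
            refine (combineD_card (α := Fin i ⊕ₗ ↥P₀) (β := Fin i ⊕ₗ ↥R₀) _ _).trans ?_
            rw [h1, h2]
            omega
          · have hq : toLex (Sum.inr q) ∈ (sumView P₀ R₀ i (combineD
                (chainPrefix i (m + 1 - D₀.card) (↥P₀)) (lowerFull i D₀))).toRight := by
              rw [sumView_combine, combineD_toRight]
              exact mem_lowerFull.2 (Or.inr ⟨q, hq₀, rfl⟩)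
            have hLno : ∀ p : ↥P₀, toLex (Sum.inr p) ∉ (sumView P₀ R₀ i (combineD
                (chainPrefix i (m + 1 - D₀.card) (↥P₀)) (lowerFull i D₀))).toLeft := by
              intro p
              rw [sumView_combine, combineD_toLeft]
              exact chainPrefix_no_inr p
            obtain ⟨hcls, -⟩ := classifyB P₀ R₀ i hdown hq hLno
            rw [hcls, sumView_combine, combineD_toLeft, combineD_toRight, lexTop_lowerFull,
              chainPrefix_card hbi, fU_cls]
            unfold fMap
            rw [size_subposet]
      · rw [Finset.mem_coe, Finset.mem_Icc] at ha
        have ha1 : a ≤ i := by omega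
        have ha2 : n - a ≤ i := by omega
        have hdown : IsDownset (PRposet P₀ R₀ i)
            (combineD (chainPrefix i a (↥P₀)) (chainPrefix i (n - a) (↥R₀))) :=
          combineD_downset chainPrefix_downset chainPrefix_downset
        refine ⟨combineD (chainPrefix i a (↥P₀)) (chainPrefix i (n - a) (↥R₀)),
          hdown, ?_, ?_⟩
        · refine (combineD_card (α := Fin i ⊕ₗ ↥P₀) (β := Fin i ⊕ₗ ↥R₀) _ _).trans ?_
          rw [chainPrefix_card ha1, chainPrefix_card ha2]
          omega
        · have hLno : ∀ p : ↥P₀, toLex (Sum.inr p) ∉ (sumView P₀ R₀ i (combineD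
              (chainPrefix i a (↥P₀)) (chainPrefix i (n - a) (↥R₀)))).toLeft := by
            intro p
            rw [sumView_combine, combineD_toLeft]
            exact chainPrefix_no_inr p
          have hRno : ∀ q : ↥R₀, toLex (Sum.inr q) ∉ (sumView P₀ R₀ i (combineD
              (chainPrefix i a (↥P₀)) (chainPrefix i (n - a) (↥R₀)))).toRight := by
            intro q
            rw [sumView_combine, combineD_toRight]
            exact chainPrefix_no_inr q
          obtain ⟨hcls, -, -, -⟩ := classifyC P₀ R₀ i hLno hRno
          rw [hcls, sumView_combine, combineD_toLeft, combineD_toRight,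
            chainPrefix_card ha1, chainPrefix_card ha2]
          rfl
  have hAfin := DAllSet_finite P₀
  have hBfin := DAllSet_finite R₀
  have hUfin : (DAllSet P₀ ∪ DAllSet R₀).Finite := hAfin.union hBfin
  have hIfin : (↑(Finset.Icc (m + 1) (n / 2)) : Set ℕ).Finite := Finset.finite_toSet _
  have hinjf : Set.InjOn (fU i m) (DAllSet P₀ ∪ DAllSet R₀) := by
    intro c₁ h₁ c₂ h₂ he
    obtain ⟨X, rfl⟩ := Quotient.exists_rep c₁
    obtain ⟨Y, rfl⟩ := Quotient.exists_rep c₂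
    have hs₁ : 1 ≤ size X := by
      rcases h₁ with h | h
      · exact usize_pos_of_mem h
      · exact usize_pos_of_mem h
    have hs₂ : 1 ≤ size Y := by
      rcases h₂ with h | h
      · exact usize_pos_of_mem h
      · exact usize_pos_of_mem h
    have he' : fMap i m X = fMap i m Y := he
    have hiso := model_inj (γ := ↥X) (δ := ↥Y)
      (show m + 1 - size X ≤ i by omega) (show m + 1 - size Y ≤ i by omega)
      (cls_eq_iff.1 he')
    exact Quotient.sound hiso
  have hinjh : Set.InjOn (hM n) ↑(Finset.Icc (m + 1) (n / 2)) := by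
    intro a ha b hb he
    rw [Finset.mem_coe, Finset.mem_Icc] at ha hb
    obtain ⟨e⟩ : Nonempty (Fin a ⊕ Fin (n - a) ≃o Fin b ⊕ Fin (n - b)) := cls_eq_iff.1 he
    have h1 : (n - a) ≤ (n - b) := chains_le e (by omega)
    have h2 : (n - b) ≤ (n - a) := chains_le e.symm (by omega)
    omega
  have hdisj : Disjoint (fU i m '' (DAllSet P₀ ∪ DAllSet R₀))
      (hM n '' ↑(Finset.Icc (m + 1) (n / 2))) := by
    rw [Set.disjoint_left]
    rintro c ⟨c₀, hc₀, rfl⟩ ⟨a, ha, he⟩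
    rw [Finset.mem_coe, Finset.mem_Icc] at ha
    obtain ⟨X, rfl⟩ := Quotient.exists_rep c₀
    have hs : 1 ≤ size X := by
      rcases hc₀ with h | h
      · exact usize_pos_of_mem h
      · exact usize_pos_of_mem h
    have hne : Nonempty ↥X := by
      rw [← Fintype.card_pos_iff]
      exact hs
    have he' : cls (modelChains a (n - a)) = fMap i m X := he
    exact model_not_chain (γ := ↥X) hne (show a ≤ i by omega) (show n - a ≤ i by omega)
      (cls_eq_iff.1 he'.symm)
  unfold dNum
  rw [key, Set.ncard_union_eq hdisj (hUfin.image _) (hIfin.image _),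
    Set.ncard_image_of_injOn hinjf, Set.ncard_image_of_injOn hinjh,
    Set.ncard_coe_finset, Nat.card_Icc]
  have hiu := Set.ncard_union_add_ncard_inter (DAllSet P₀) (DAllSet R₀) hAfin hBfin
  unfold CNum
  omega

end MainCount

/-- For non-isomorphic `P₀`, `R₀` of size `m` and `i > m`,
`d_{m+i+1}(P_iR_i) = C(P₀R₀) + ⌈(i−m)/2⌉`; in particular the sequence increases by `1`
exactly when `m + i` is odd. -/
theorem ladder_dNum (m : ℕ) (P₀ R₀ : FinPartOrd.{0}) (hP : size P₀ = m) (hR : size R₀ = m)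
    (hniso : ¬Nonempty (↥P₀ ≃o ↥R₀)) (i : ℕ) (hi : m < i) :
    dNum (m + i + 1) (PRposet P₀ R₀ i) = CNum P₀ R₀ + (i - m + 1) / 2 ∧
      (Even (m + i) →
        dNum (m + i + 1) (PRposet P₀ R₀ i) = dNum (m + i) (PRposet P₀ R₀ (i - 1))) ∧
      (Odd (m + i) →
        dNum (m + i + 1) (PRposet P₀ R₀ i) = dNum (m + i) (PRposet P₀ R₀ (i - 1)) + 1) := by
  have h1 := main_count m P₀ R₀ hP hR i (le_of_lt hi)
  have h2 := main_count m P₀ R₀ hP hR (i - 1) (by omega)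
  rw [show m + (i - 1) + 1 = m + i from by omega] at h2
  refine ⟨h1, ?_, ?_⟩
  · intro hev
    obtain ⟨k, hk⟩ := hev
    rw [h1, h2]
    omega
  · intro hod
    obtain ⟨k, hk⟩ := hod
    rw [h1, h2]
    omega
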